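/- For every c > 0, ∫₀^∞ E₁(c/x) e^{-x} dx = 2 K₀(2√c). -/

import Mathlib

open MeasureTheory Real

/-- Exponential integral `E₁(x) = ∫ₓ^∞ t⁻¹ e^{-t} dt`. -/
noncomputable def expInt (x : ℝ) : ℝ :=
  ∫ t in Set.Ioi x, Real.exp (-t) / t

/-- Modified Bessel function of the second kind and order zero:
`K₀(z) = ∫₀^∞ e^{-z cosh t} dt`. -/
noncomputable def besselK0 (z : ℝ) : ℝ :=
  ∫ t in Set.Ioi (0 : ℝ), Real.exp (-z * Real.cosh t)

open Set Filter in
lemma continuousOn_expInt_integrand :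
    ContinuousOn (fun t : ℝ => Real.exp (-t) / t) {t : ℝ | t ≠ 0} :=
  ((Real.continuous_exp.comp continuous_neg).continuousOn).div
    continuous_id.continuousOn (fun t ht => ht)

open Set Filter in
lemma integrableOn_expInt_integrand {z : ℝ} (hz : 0 < z) :
    IntegrableOn (fun t : ℝ => Real.exp (-t) / t) (Set.Ioi z) := by
  have hmaj : IntegrableOn (fun t : ℝ => Real.exp (-t) / z) (Set.Ioi z) := by
    have := (exp_neg_integrableOn_Ioi z (by norm_num : (0:ℝ) < 1)).mul_const z⁻¹
    simp only [div_eq_mul_inv, neg_one_mul] at this ⊢; exact this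
  refine hmaj.mono' ?_ ?_
  · exact (continuousOn_expInt_integrand.mono (fun t ht => ne_of_gt (hz.trans ht))
      ).aestronglyMeasurable measurableSet_Ioi
  · filter_upwards [ae_restrict_mem measurableSet_Ioi] with t ht
    have ht0 : 0 < t := hz.trans ht
    rw [Real.norm_eq_abs, abs_of_nonneg (div_nonneg (Real.exp_nonneg _) ht0.le)]
    gcongr
    exact le_of_lt ht

open Set in
lemma expInt_nonneg {z : ℝ} (hz : 0 < z) : 0 ≤ expInt z :=
  setIntegral_nonneg measurableSet_Ioi fun t ht =>
    div_nonneg (Real.exp_nonneg _) (le_of_lt (hz.trans ht))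

open Set in
lemma expInt_le {z : ℝ} (hz : 0 < z) : expInt z ≤ Real.exp (-z) / z := by
  have hmaj : IntegrableOn (fun t : ℝ => Real.exp (-t) / z) (Set.Ioi z) := by
    have := (exp_neg_integrableOn_Ioi z (by norm_num : (0:ℝ) < 1)).mul_const z⁻¹
    simp only [div_eq_mul_inv, neg_one_mul] at this ⊢; exact this
  have h1 : expInt z ≤ ∫ t in Set.Ioi z, Real.exp (-t) / z := by
    refine setIntegral_mono_on (integrableOn_expInt_integrand hz) hmaj measurableSet_Ioi ?_
    intro t ht
    gcongr
    exact le_of_lt ht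
  calc expInt z ≤ ∫ t in Set.Ioi z, Real.exp (-t) / z := h1
    _ = (∫ t in Set.Ioi z, Real.exp (-t)) / z := by rw [integral_div]
    _ = Real.exp (-z) / z := by rw [integral_exp_neg_Ioi]

open Set in
lemma expInt_eq {x : ℝ} (hx : 0 < x) :
    expInt x = expInt 1 - ∫ t in (1:ℝ)..x, Real.exp (-t) / t := by
  rcases le_total x 1 with hx1 | hx1
  · rw [intervalIntegral.integral_symm, intervalIntegral.integral_of_le hx1, sub_neg_eq_add]
    have hsplit : Set.Ioi x = Set.Ioc x 1 ∪ Set.Ioi 1 := (Set.Ioc_union_Ioi_eq_Ioi hx1).symm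
    have hdisj : Disjoint (Set.Ioc x 1) (Set.Ioi 1) := by
      rw [Set.disjoint_left]; rintro a ⟨_, h1⟩ h2; exact absurd h1 (not_le.2 h2)
    rw [expInt, hsplit, setIntegral_union hdisj measurableSet_Ioi
      ((integrableOn_expInt_integrand hx).mono_set Set.Ioc_subset_Ioi_self)
      (integrableOn_expInt_integrand one_pos)]
    rw [expInt]; exact add_comm _ _
  · rw [intervalIntegral.integral_of_le hx1]
    have hsplit : Set.Ioi 1 = Set.Ioc 1 x ∪ Set.Ioi x := (Set.Ioc_union_Ioi_eq_Ioi hx1).symm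
    have hdisj : Disjoint (Set.Ioc 1 x) (Set.Ioi x) := by
      rw [Set.disjoint_left]; rintro a ⟨_, h1⟩ h2; exact absurd h1 (not_le.2 h2)
    have : expInt 1 = (∫ t in Set.Ioc 1 x, Real.exp (-t) / t) + expInt x := by
      rw [expInt, hsplit, setIntegral_union hdisj measurableSet_Ioi
        ((integrableOn_expInt_integrand one_pos).mono_set Set.Ioc_subset_Ioi_self)
        (integrableOn_expInt_integrand hx)]
      rfl
    rw [this]; ring

open Set Filter in
lemma expInt_hasDerivAt {x : ℝ} (hx : 0 < x) :
    HasDerivAt expInt (-(Real.exp (-x) / x)) x := by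
  have hint : IntervalIntegrable (fun t : ℝ => Real.exp (-t) / t) volume 1 x := by
    apply ContinuousOn.intervalIntegrable
    apply continuousOn_expInt_integrand.mono
    intro t ht
    have : 0 < min 1 x := lt_min one_pos hx
    exact ne_of_gt (lt_of_lt_of_le this ht.1)
  have hmeas : StronglyMeasurableAtFilter (fun t : ℝ => Real.exp (-t) / t) (nhds x) volume :=
    ⟨Set.Ioi 0, Ioi_mem_nhds hx,
      (continuousOn_expInt_integrand.mono (fun t ht => ne_of_gt ht)).aestronglyMeasurable
        measurableSet_Ioi⟩
  have hcont : ContinuousAt (fun t : ℝ => Real.exp (-t) / t) x :=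
    ((Real.continuous_exp.comp continuous_neg).continuousAt).div continuousAt_id (ne_of_gt hx)
  have hd := intervalIntegral.integral_hasDerivAt_right hint hmeas hcont
  have hd2 : HasDerivAt (fun u : ℝ => expInt 1 - ∫ t in (1:ℝ)..u, Real.exp (-t) / t)
      (-(Real.exp (-x) / x)) x := hd.const_sub (expInt 1)
  refine hd2.congr_of_eventuallyEq ?_
  filter_upwards [Ioi_mem_nhds hx] with y hy using expInt_eq hy

open Set Filter in
lemma continuousOn_expInt : ContinuousOn expInt (Set.Ioi (0:ℝ)) :=
  fun x hx => ((expInt_hasDerivAt hx).continuousAt).continuousWithinAt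

/-- For every `c > 0`, `∫₀^∞ E₁(c/x) e^{-x} dx = 2 K₀(2√c)`. -/
theorem integral_expInt_div (c : ℝ) (hc : 0 < c) :
    ∫ x in Set.Ioi (0 : ℝ), expInt (c / x) * Real.exp (-x)
      = 2 * besselK0 (2 * Real.sqrt c) := by
  set s := Real.sqrt c with hs_def
  have hs : 0 < s := Real.sqrt_pos.2 hc
  have hs2 : s ^ 2 = c := Real.sq_sqrt hc.le
  -- basic pointwise bounds
  have hbound1 : ∀ x : ℝ, 0 < x → expInt (c / x) ≤ x / c := by
    intro x hx
    have hcx : 0 < c / x := div_pos hc hx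
    calc expInt (c/x) ≤ Real.exp (-(c/x)) / (c/x) := expInt_le hcx
      _ ≤ 1 / (c/x) := by gcongr; exact Real.exp_le_one_iff.2 (by linarith)
      _ = x / c := one_div_div c x
  have hbound3 : ∀ x : ℝ, x ≤ 2 * Real.exp (x/2) := by
    intro x
    have := Real.add_one_le_exp (x/2)
    linarith
  have hgb : ∀ x : ℝ, 0 < x →
      expInt (c/x) * Real.exp (-x) ≤ 2/c * Real.exp (-(1/2) * x) := by
    intro x hx
    have h2 : x * Real.exp (-x) ≤ 2 * Real.exp (-(1/2)*x) := by
      calc x * Real.exp (-x) ≤ (2 * Real.exp (x/2)) * Real.exp (-x) := by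
            gcongr; exact hbound3 x
        _ = 2 * Real.exp (-(1/2)*x) := by
            rw [mul_assoc, ← Real.exp_add]; congr 2; ring
    calc expInt (c/x) * Real.exp (-x) ≤ (x/c) * Real.exp (-x) := by
          gcongr; exact hbound1 x hx
      _ = (x * Real.exp (-x))/c := by ring
      _ ≤ (2 * Real.exp (-(1/2)*x))/c := by gcongr
      _ = 2/c * Real.exp (-(1/2)*x) := by ring
  have hbound2 : ∀ x : ℝ, 0 < x → Real.exp (-(c/x)) / x ≤ 1 / c := by
    intro x hx
    have hkey : c ≤ Real.exp (c/x) * x := by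
      have h := Real.add_one_le_exp (c/x)
      have h2 : c / x ≤ Real.exp (c/x) := by linarith
      calc c = (c/x) * x := by field_simp
        _ ≤ Real.exp (c/x) * x := by gcongr
    rw [Real.exp_neg, ← one_div, div_div, div_le_div_iff₀ (by positivity) hc]
    linarith
  -- integrability of the two pieces
  have hcont_g : ContinuousOn (fun x : ℝ => expInt (c/x) * Real.exp (-x)) (Set.Ioi 0) := by
    refine ContinuousOn.mul ?_ ((Real.continuous_exp.comp continuous_neg).continuousOn)
    exact continuousOn_expInt.comp
      (continuousOn_const.div continuousOn_id (fun x hx => ne_of_gt hx))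
      (fun x hx => div_pos hc hx)
  have hcont_h : ContinuousOn
      (fun x : ℝ => Real.exp (-x) * (Real.exp (-(c/x)) / x)) (Set.Ioi 0) := by
    refine ContinuousOn.mul ((Real.continuous_exp.comp continuous_neg).continuousOn) ?_
    refine ContinuousOn.div ?_ continuousOn_id (fun x hx => ne_of_gt hx)
    exact (Real.continuous_exp.comp continuous_neg).comp_continuousOn
      (continuousOn_const.div continuousOn_id (fun x hx => ne_of_gt hx))
  have hint_g : IntegrableOn (fun x : ℝ => expInt (c/x) * Real.exp (-x)) (Set.Ioi 0) := by
    have hmaj : IntegrableOn (fun x : ℝ => 2/c * Real.exp (-(1/2 : ℝ) * x)) (Set.Ioi 0) :=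
      (exp_neg_integrableOn_Ioi 0 (by norm_num : (0:ℝ) < 1/2)).const_mul _
    refine hmaj.mono' (hcont_g.aestronglyMeasurable measurableSet_Ioi) ?_
    filter_upwards [ae_restrict_mem measurableSet_Ioi] with x hx
    have hx : (0:ℝ) < x := hx
    have h1 : 0 ≤ expInt (c/x) := expInt_nonneg (div_pos hc hx)
    rw [Real.norm_eq_abs, abs_of_nonneg (mul_nonneg h1 (Real.exp_nonneg _))]
    exact hgb x hx
  have hint_h : IntegrableOn
      (fun x : ℝ => Real.exp (-x) * (Real.exp (-(c/x)) / x)) (Set.Ioi 0) := by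
    have hmaj : IntegrableOn (fun x : ℝ => 1/c * Real.exp (-(1:ℝ) * x)) (Set.Ioi 0) :=
      (exp_neg_integrableOn_Ioi 0 one_pos).const_mul _
    refine hmaj.mono' (hcont_h.aestronglyMeasurable measurableSet_Ioi) ?_
    filter_upwards [ae_restrict_mem measurableSet_Ioi] with x hx
    have hx : (0:ℝ) < x := hx
    have h1 : 0 ≤ Real.exp (-(c/x)) / x := div_nonneg (Real.exp_nonneg _) hx.le
    rw [Real.norm_eq_abs, abs_of_nonneg (mul_nonneg (Real.exp_nonneg _) h1)]
    calc Real.exp (-x) * (Real.exp (-(c/x)) / x) ≤ Real.exp (-x) * (1/c) :=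
          mul_le_mul_of_nonneg_left (hbound2 x hx) (Real.exp_nonneg _)
      _ = 1/c * Real.exp (-(1:ℝ) * x) := by rw [neg_one_mul]; ring
  -- integration by parts via FTC on (0, ∞)
  set F : ℝ → ℝ := fun x => if x ≤ 0 then 0 else -(Real.exp (-x) * expInt (c / x)) with hF_def
  set φ : ℝ → ℝ := fun x =>
    expInt (c/x) * Real.exp (-x) - Real.exp (-x) * (Real.exp (-(c/x)) / x) with hφ_def
  have hderiv : ∀ x ∈ Set.Ioi (0:ℝ), HasDerivAt F (φ x) x := by
    intro x hx
    have hx : (0:ℝ) < x := hx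
    have hcx : 0 < c / x := div_pos hc hx
    have h1 : HasDerivAt (fun y : ℝ => c / y) (c * (-(x^2)⁻¹)) x := by
      simpa [div_eq_mul_inv] using (hasDerivAt_inv (ne_of_gt hx)).const_mul c
    have h2 : HasDerivAt (fun y : ℝ => expInt (c / y))
        (-(Real.exp (-(c/x)) / (c/x)) * (c * (-(x^2)⁻¹))) x :=
      (expInt_hasDerivAt hcx).comp x h1
    have h2' : HasDerivAt (fun y : ℝ => expInt (c / y)) (Real.exp (-(c/x)) / x) x := by
      convert h2 using 1
      field_simp
    have hexp : HasDerivAt (fun y : ℝ => Real.exp (-y)) (-Real.exp (-x)) x := by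
      exact ((Real.hasDerivAt_exp (-x)).comp x (hasDerivAt_neg x)).congr_deriv (by ring)
    have hprod := (hexp.mul h2').neg
    have hF : HasDerivAt (fun y : ℝ => -(Real.exp (-y) * expInt (c / y))) (φ x) x := by
      refine HasDerivAt.congr_deriv hprod ?_
      rw [hφ_def]
      ring
    refine hF.congr_of_eventuallyEq ?_
    filter_upwards [Ioi_mem_nhds hx] with y hy
    simp only [hF_def, if_neg (not_le.2 (Set.mem_Ioi.1 hy))]
  have hF0 : F 0 = 0 := if_pos le_rfl
  have hcontF : ContinuousWithinAt F (Set.Ici 0) 0 := by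
    rw [ContinuousWithinAt, hF0]
    apply squeeze_zero_norm' (a := fun x => x / c)
    · filter_upwards [self_mem_nhdsWithin] with x hx
      have hx : (0:ℝ) ≤ x := hx
      rcases eq_or_lt_of_le hx with h | h
      · simp [hF_def, ← h]
      · have h1 : 0 ≤ expInt (c/x) := expInt_nonneg (div_pos hc h)
        simp only [hF_def, if_neg (not_le.2 h), norm_neg, Real.norm_eq_abs,
          abs_of_nonneg (mul_nonneg (Real.exp_nonneg _) h1)]
        calc Real.exp (-x) * expInt (c/x) ≤ 1 * (x/c) := by
              refine mul_le_mul ?_ (hbound1 x h) h1 one_pos.le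
              exact Real.exp_le_one_iff.2 (by linarith)
          _ = x / c := one_mul _
    · have : Filter.Tendsto (fun x : ℝ => x / c) (nhds 0) (nhds (0 / c)) :=
        (continuous_id.div_const c).tendsto 0
      rw [zero_div] at this
      exact this.mono_left nhdsWithin_le_nhds
  have htop : Filter.Tendsto F Filter.atTop (nhds 0) := by
    apply squeeze_zero_norm' (a := fun x : ℝ => 2/c * Real.exp (-(1/2) * x))
    · filter_upwards [Filter.eventually_gt_atTop 0] with x hx
      have h1 : 0 ≤ expInt (c/x) := expInt_nonneg (div_pos hc hx)
      simp only [hF_def, if_neg (not_le.2 hx), norm_neg, Real.norm_eq_abs,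
        abs_of_nonneg (mul_nonneg (Real.exp_nonneg _) h1)]
      calc Real.exp (-x) * expInt (c/x) = expInt (c/x) * Real.exp (-x) := mul_comm _ _
        _ ≤ 2/c * Real.exp (-(1/2) * x) := hgb x hx
    · have h1 : Filter.Tendsto (fun x : ℝ => Real.exp (-(1/2 : ℝ) * x))
          Filter.atTop (nhds 0) := by
        have h2 : Filter.Tendsto (fun x : ℝ => (1/2 : ℝ) * x) Filter.atTop Filter.atTop :=
          Filter.Tendsto.const_mul_atTop (by norm_num) Filter.tendsto_id
        have := Real.tendsto_exp_neg_atTop_nhds_zero.comp h2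
        simpa [Function.comp_def, neg_mul] using this
      simpa using h1.const_mul (2/c)
  have hintφ : IntegrableOn φ (Set.Ioi 0) := hint_g.sub hint_h
  have key := integral_Ioi_of_hasDerivAt_of_tendsto hcontF hderiv hintφ htop
  rw [hF0, sub_zero] at key
  have hsplit : ∫ x in Set.Ioi (0:ℝ), φ x
      = (∫ x in Set.Ioi (0:ℝ), expInt (c/x) * Real.exp (-x))
        - ∫ x in Set.Ioi (0:ℝ), Real.exp (-x) * (Real.exp (-(c/x)) / x) :=
    integral_sub hint_g hint_h
  have hIBP : (∫ x in Set.Ioi (0:ℝ), expInt (c/x) * Real.exp (-x))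
      = ∫ x in Set.Ioi (0:ℝ), Real.exp (-x) * (Real.exp (-(c/x)) / x) := by
    have := hsplit.symm.trans key
    linarith
  rw [hIBP]
  -- change of variables y = s * exp u
  have himg : (fun u : ℝ => s * Real.exp u) '' Set.univ = Set.Ioi 0 := by
    rw [Set.image_univ]
    ext y
    simp only [Set.mem_range, Set.mem_Ioi]
    constructor
    · rintro ⟨u, rfl⟩; positivity
    · intro hy
      exact ⟨Real.log (y/s), by rw [Real.exp_log (div_pos hy hs)]; field_simp⟩
  have hCoV := integral_image_eq_integral_abs_deriv_smul MeasurableSet.univ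
    (fun u _ => ((Real.hasDerivAt_exp u).const_mul s).hasDerivWithinAt)
    (fun a _ b _ hab => Real.exp_injective (mul_left_cancel₀ (ne_of_gt hs) hab))
    (fun y => Real.exp (-y) * (Real.exp (-(c/y)) / y))
  rw [himg, setIntegral_univ] at hCoV
  have hpt : ∀ u : ℝ, |s * Real.exp u| •
      (Real.exp (-(s * Real.exp u)) * (Real.exp (-(c/(s * Real.exp u))) / (s * Real.exp u)))
      = Real.exp (-(2*s) * Real.cosh u) := by
    intro u
    have he : (0:ℝ) < s * Real.exp u := by positivity
    have h1 : c / (s * Real.exp u) = s * Real.exp (-u) := by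
      rw [Real.exp_neg, ← hs2]; field_simp
    rw [smul_eq_mul, abs_of_pos he, h1]
    have h2 : Real.exp (-(s * Real.exp u)) * (Real.exp (-(s * Real.exp (-u))) / (s * Real.exp u))
        = Real.exp (-(s * Real.exp u) + -(s * Real.exp (-u))) / (s * Real.exp u) := by
      rw [Real.exp_add]; ring
    rw [h2, mul_comm (s * Real.exp u), div_mul_cancel₀ _ (ne_of_gt he)]
    congr 1
    rw [Real.cosh_eq]
    ring
  calc ∫ x in Set.Ioi (0:ℝ), Real.exp (-x) * (Real.exp (-(c/x)) / x)
      = ∫ u : ℝ, |s * Real.exp u| •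
          (Real.exp (-(s * Real.exp u)) *
            (Real.exp (-(c/(s * Real.exp u))) / (s * Real.exp u))) := hCoV
    _ = ∫ u : ℝ, Real.exp (-(2*s) * Real.cosh u) :=
        integral_congr_ae (Filter.Eventually.of_forall hpt)
    _ = 2 * ∫ t in Set.Ioi (0:ℝ), Real.exp (-(2*s) * Real.cosh t) := by
        rw [← integral_comp_abs (f := fun t => Real.exp (-(2*s) * Real.cosh t))]
        refine integral_congr_ae (Filter.Eventually.of_forall fun u => ?_)
        simp [Real.cosh_abs]
    _ = 2 * besselK0 (2 * s) := rfl
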